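/- Let P = (Σ, s₀, g) be a probabilistic planning problem with Σ = (S, A, γ, Pr), and let P̂ = (Σ̂, s₀, g) be the classical planning problem whose domain Σ̂ is the all-outcomes determinization of Σ. If a condition φ is a landmark for P̂, then φ is a landmark for P. -/
import Mathlib


/-- A probabilistic planning domain: `γ` gives the set of possible successor
states, `pr` the transition probabilities (a distribution over `γ s a`
whenever `a` is applicable in `s`, i.e. `γ s a ≠ ∅`). -/
structure ProbDomain (S A : Type*) where
  γ : S → A → Finset S
  pr : S → A → S → ℝ
  pr_nonneg : ∀ s a s', s' ∈ γ s a → 0 ≤ pr s a s'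
  pr_sum : ∀ s a, (γ s a).Nonempty → ∑ s' ∈ γ s a, pr s a s' = 1

/-- A policy: a partial function from states to actions, mapping each state in
its domain to an action applicable there. -/
structure Policy {S A : Type*} (D : ProbDomain S A) where
  act : S → Option A
  applicable : ∀ s a, act s = some a → (D.γ s a).Nonempty

/-- `σ` is a history of policy `pol` from `s0` (w.r.t. goal `g`):
a nonempty finite sequence starting at `s0`, following transitions allowed by
`γ` and `pol`, and such that a position is final iff the state there satisfies
`g` or is outside the domain of the policy. -/
def IsHistory {S A : Type*} (D : ProbDomain S A) (pol : Policy D)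
    (s0 : S) (g : S → Prop) (σ : List S) : Prop :=
  1 ≤ σ.length ∧ σ.getD 0 s0 = s0 ∧
  (∀ i, i + 1 < σ.length →
    ∃ a, pol.act (σ.getD i s0) = some a ∧
      σ.getD (i + 1) s0 ∈ D.γ (σ.getD i s0) a) ∧
  (∀ i, i < σ.length →
    ((g (σ.getD i s0) ∨ pol.act (σ.getD i s0) = none) ↔ i = σ.length - 1))

/-- Membership in `H(s0, pol, g)`: a history of `pol` from `s0` whose final
state satisfies `g`. -/
def InGoalHistories {S A : Type*} (D : ProbDomain S A) (pol : Policy D)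
    (s0 : S) (g : S → Prop) (σ : List S) : Prop :=
  IsHistory D pol s0 g σ ∧ g (σ.getD (σ.length - 1) s0)

/-- A classical (deterministic) planning domain: `δ` is a partial
deterministic transition function. -/
structure ClassDomain (S B : Type*) where
  δ : S → B → Option S

/-- `execPlan Dh s plan` is the state obtained by applying the actions of the
plan in order starting from `s`, when every action in turn is applicable. -/
def execPlan {S B : Type*} (Dh : ClassDomain S B) : S → List B → Option S
  | s, [] => some s
  | s, b :: rest => (Dh.δ s b).bind fun s' => execPlan Dh s' rest

/-- A plan solves the classical problem `(Dh, s0, g)` if executing it from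
`s0` is defined and reaches a state satisfying `g`. -/
def SolvesClass {S B : Type*} (Dh : ClassDomain S B) (s0 : S) (g : S → Prop)
    (plan : List B) : Prop :=
  ∃ s, execPlan Dh s0 plan = some s ∧ g s

/-- The condition `φ` is true at time `i` in the plan `plan` from `s0`. -/
def TrueAt {S B : Type*} (Dh : ClassDomain S B) (s0 : S) (φ : S → Prop)
    (plan : List B) (i : ℕ) : Prop :=
  ∃ s, execPlan Dh s0 (plan.take i) = some s ∧ φ s

/-- `φ` is a landmark for the classical problem `(Dh, s0, g)`: it is true at
some time in every solution plan. -/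
def ClassLandmark {S B : Type*} (Dh : ClassDomain S B) (s0 : S)
    (g φ : S → Prop) : Prop :=
  ∀ plan : List B, SolvesClass Dh s0 g plan →
    ∃ i ≤ plan.length, TrueAt Dh s0 φ plan i

/-- `Dh` is an all-outcomes determinization of `D`: every possible outcome of
every applicable probabilistic action is realized by some deterministic
action, and conversely every deterministic transition comes from an outcome of
some probabilistic action. -/
def IsAllOutcomes {S A B : Type*} (D : ProbDomain S A)
    (Dh : ClassDomain S B) : Prop :=
  (∀ s a s', s' ∈ D.γ s a → ∃ b, Dh.δ s b = some s') ∧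
  (∀ s b s', Dh.δ s b = some s' → ∃ a, s' ∈ D.γ s a)

/-- `φ` is a landmark for the probabilistic problem `(D, s0, g)`: for every
policy and every history in `H(s0, π, g)`, `φ` is true at some time. -/
def ProbLandmark {S A : Type*} (D : ProbDomain S A) (s0 : S)
    (g φ : S → Prop) : Prop :=
  ∀ (pol : Policy D) (σ : List S), InGoalHistories D pol s0 g σ →
    ∃ i < σ.length, φ (σ.getD i s0)

lemma exec_take_aux {S B : Type*} (Dh : ClassDomain S B) :
    ∀ (plan : List B) (f : ℕ → S),
      (∀ j, (hj : j < plan.length) → Dh.δ (f j) (plan.get ⟨j, hj⟩) = some (f (j + 1))) →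
      ∀ i ≤ plan.length, execPlan Dh (f 0) (plan.take i) = some (f i) := by
  intro plan
  induction plan with
  | nil =>
      intro f _ i hi
      simp only [List.length_nil, Nat.le_zero] at hi
      subst hi
      simp [execPlan]
  | cons b rest ih =>
      intro f hstep i hi
      cases i with
      | zero => simp [execPlan]
      | succ i' =>
          have h0 : Dh.δ (f 0) b = some (f 1) := hstep 0 (by simp)
          have := ih (fun j => f (j + 1))
            (fun j hj => hstep (j + 1) (by simpa using Nat.succ_lt_succ hj))
            i' (by simpa using Nat.lt_succ_iff.mp (Nat.lt_succ_of_le hi))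
          simp only [List.take_succ_cons, execPlan, h0, Option.bind_some]
          exact this

/-- If `φ` is a landmark for the all-outcomes
determinization of a probabilistic planning problem, then `φ` is a landmark
for the probabilistic problem itself. -/
theorem landmark_of_determinization {S A B : Type*}
    [Fintype S] [Fintype A] [Fintype B]
    (D : ProbDomain S A) (Dh : ClassDomain S B) (hdet : IsAllOutcomes D Dh)
    (s0 : S) (g φ : S → Prop) (hlm : ClassLandmark Dh s0 g φ) :
    ProbLandmark D s0 g φ := by
  intro pol σ ⟨⟨hlen, h0, hstep, _⟩, hgoal⟩
  set n := σ.length with hn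
  set f : ℕ → S := fun i => σ.getD i s0 with hf
  -- choose deterministic actions realizing each step
  have hb : ∀ j : Fin (n - 1), ∃ b, Dh.δ (f j) b = some (f (j + 1)) := by
    intro ⟨j, hj⟩
    have hj' : j + 1 < n := by omega
    obtain ⟨a, _, hmem⟩ := hstep j hj'
    exact hdet.1 _ a _ hmem
  choose bf hbf using hb
  set plan : List B := List.ofFn bf with hplan
  have hplen : plan.length = n - 1 := by simp [hplan]
  have hexec : ∀ i ≤ plan.length, execPlan Dh (f 0) (plan.take i) = some (f i) := by
    apply exec_take_aux
    intro j hj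
    have hj' : j < n - 1 := by rwa [hplen] at hj
    have : plan.get ⟨j, hj⟩ = bf ⟨j, hj'⟩ := by simp [hplan]
    rw [this]
    exact hbf ⟨j, hj'⟩
  have hf0 : f 0 = s0 := h0
  have hsolve : SolvesClass Dh s0 g plan := by
    refine ⟨f (n - 1), ?_, hgoal⟩
    have := hexec plan.length le_rfl
    rw [List.take_length, hf0, hplen] at this
    exact this
  obtain ⟨i, hile, s, hexecs, hφ⟩ := hlm plan hsolve
  have := hexec i hile
  rw [hf0, hexecs] at this
  refine ⟨i, by omega, ?_⟩
  have hs : s = f i := by injection this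
  show φ (f i)
  rw [← hs]; exact hφ
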